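/- Let W: [0, V] → [0,1] be a nondecreasing right-continuous function (the winning-probability function at the final instant) and b ∈ [0, V] a fee. Define D = (V - b)W(b) - ∫₀^V (V - x) dW(x) restricted to x ≤ V (Lebesgue–Stieltjes integral). Then D ≤ 0, with equality attainable when b = V. Consequently, the strategy of waiting until the final instant and paying the minimal winning fee yields expected utility at least as large as committing in advance to any fixed fee b. -/

import Mathlib

open MeasureTheory

/-- Core inequality of the PoS half of Theorem 1: committing in advance to a fixed fee
`b` yields `(V-b)W(b)`, which is at most the prophet's payoff `∫ (V-x) dW(x)`;
i.e. `D = (V-b)W(b) - ∫₀^V (V-x) dW(x) ≤ 0`. -/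
theorem stmt7 (V b : ℝ) (hV : 0 ≤ V) (hb : b ∈ Set.Icc 0 V)
    (W : StieltjesFunction ℝ) (hW01 : ∀ x, 0 ≤ W x ∧ W x ≤ 1)
    (hWneg : ∀ x < (0:ℝ), W x = 0) :
    (V - b) * W b - ∫ x in Set.Icc 0 V, (V - x) ∂W.measure ≤ 0 := by
  obtain ⟨hb0, hbV⟩ := hb
  have hL : Function.leftLim W 0 = 0 := by
    apply leftLim_eq_of_tendsto
    have : (fun x : ℝ => W x) =ᶠ[nhdsWithin 0 (Set.Iio 0)] fun _ => (0:ℝ) := by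
      filter_upwards [self_mem_nhdsWithin] with x hx
      exact hWneg x hx
    exact (Filter.tendsto_congr' this).mpr tendsto_const_nhds
  have hIccb : W.measure (Set.Icc 0 b) = ENNReal.ofReal (W b) := by
    rw [W.measure_Icc, hL, sub_zero]
  have hIccV : W.measure (Set.Icc 0 V) = ENNReal.ofReal (W V) := by
    rw [W.measure_Icc, hL, sub_zero]
  have hfin : W.measure (Set.Icc 0 V) ≠ ⊤ := by simp [hIccV]
  have hint : IntegrableOn (fun x => V - x) (Set.Icc 0 V) W.measure :=
    Continuous.integrableOn_Icc (by fun_prop)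
  have h1 : (V - b) * (W.measure (Set.Icc 0 b)).toReal ≤
      ∫ x in Set.Icc 0 b, (V - x) ∂W.measure := by
    refine le_trans (le_of_eq ?_) (setIntegral_ge_of_const_le (c := V - b) measurableSet_Icc ?_ ?_ ?_)
    · rw [smul_eq_mul, mul_comm]; rfl
    · simp [hIccb]
    · intro x hx; linarith [hx.2]
    · exact hint.mono_set (Set.Icc_subset_Icc_right hbV)
  have h2 : ∫ x in Set.Icc 0 b, (V - x) ∂W.measure ≤
      ∫ x in Set.Icc 0 V, (V - x) ∂W.measure := by
    apply setIntegral_mono_set hint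
    · rw [Filter.EventuallyLE, ae_restrict_iff' measurableSet_Icc]
      filter_upwards with x hx
      simp only [Pi.zero_apply]
      linarith [hx.2]
    · exact Filter.Eventually.of_forall (Set.Icc_subset_Icc_right hbV)
  have : (W.measure (Set.Icc 0 b)).toReal = W b := by
    rw [hIccb, ENNReal.toReal_ofReal (hW01 b).1]
  linarith [h1, h2, this ▸ h1]
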